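/- Let 𝒢=(G,w) be a positive-weighted graph whose vertex set contains the distinct vertices 1,2,3,4, with all four vertices in a common connected component. For i ∈ [4] write D_{î} = D_{[4]∖{i}}(𝒢). Then for all distinct i, j, k, t ∈ [4] one has 5·D_{t̂} ≤ 3·D_{k̂} + 3·D_{ĵ} + 2·D_{î}. -/

import Mathlib

open SimpleGraph Finset

/-- The total weight of a subgraph: the sum of the weights of its edges. -/
noncomputable def subgraphWeight {V : Type} [Fintype V] {G : SimpleGraph V}
    (w : Sym2 V → ℝ) (R : G.Subgraph) : ℝ :=
  ∑ e ∈ (Set.toFinite R.edgeSet).toFinset, w e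

/-- `graphDist G w I` is the minimum of `subgraphWeight w R` over connected
subgraphs `R` of `G` whose vertex set contains `I`. -/
noncomputable def graphDist {V : Type} [Fintype V] (G : SimpleGraph V)
    (w : Sym2 V → ℝ) (I : Set V) : ℝ :=
  sInf { x : ℝ | ∃ R : G.Subgraph, R.Connected ∧ I ⊆ R.verts ∧ subgraphWeight w R = x }

/-- A weight function is positive on a graph if every edge has positive weight. -/
def PosWeighted {V : Type} (G : SimpleGraph V) (w : Sym2 V → ℝ) : Prop :=
  ∀ e ∈ G.edgeSet, 0 < w e



section Helpers

variable {V : Type} [Fintype V] {G : SimpleGraph V} {w : Sym2 V → ℝ}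

lemma weight_nonneg (hw : PosWeighted G w) (R : G.Subgraph) : 0 ≤ subgraphWeight w R := by
  apply Finset.sum_nonneg
  intro e he
  rw [Set.Finite.mem_toFinset] at he
  exact (hw e (R.edgeSet_subset he)).le

/-- sum over a finset of edges of R is at most the weight of R -/
lemma sum_le_weight (hw : PosWeighted G w) (R : G.Subgraph) (F : Finset (Sym2 V))
    (h : ↑F ⊆ R.edgeSet) : ∑ e ∈ F, w e ≤ subgraphWeight w R := by
  apply Finset.sum_le_sum_of_subset_of_nonneg
  · intro e he
    rw [Set.Finite.mem_toFinset]
    exact h he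
  · intro e he _
    rw [Set.Finite.mem_toFinset] at he
    exact (hw e (R.edgeSet_subset he)).le

lemma weight_sup_le (hw : PosWeighted G w) (A B : G.Subgraph) :
    subgraphWeight w (A ⊔ B) ≤ subgraphWeight w A + subgraphWeight w B := by
  classical
  have h1 : (Set.toFinite (A ⊔ B).edgeSet).toFinset =
      (Set.toFinite A.edgeSet).toFinset ∪ (Set.toFinite B.edgeSet).toFinset := by
    ext e
    simp only [Set.Finite.mem_toFinset, Finset.mem_union, Subgraph.edgeSet_sup,
      Set.mem_union]
  rw [subgraphWeight, h1]
  calc ∑ e ∈ _ ∪ _, w e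
      ≤ ∑ e ∈ (Set.toFinite A.edgeSet).toFinset, w e
        + ∑ e ∈ (Set.toFinite B.edgeSet).toFinset \ (Set.toFinite A.edgeSet).toFinset, w e := by
        rw [← Finset.sum_union (Finset.disjoint_sdiff)]
        apply Finset.sum_le_sum_of_subset_of_nonneg
        · intro e he; simp at he ⊢; tauto
        · intro e he _
          simp only [Finset.mem_union, Set.Finite.mem_toFinset, Finset.mem_sdiff] at he
          rcases he with he | he
          · exact (hw e (A.edgeSet_subset he)).le
          · exact (hw e (B.edgeSet_subset he.1)).le
    _ ≤ subgraphWeight w A + subgraphWeight w B := by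
        apply add_le_add le_rfl
        apply Finset.sum_le_sum_of_subset_of_nonneg Finset.sdiff_subset
        intro e he _
        rw [Set.Finite.mem_toFinset] at he
        exact (hw e (B.edgeSet_subset he)).le

lemma weight_toSubgraph_eq [DecidableEq V] {a b : V} (W : G.Walk a b) :
    subgraphWeight w W.toSubgraph = ∑ e ∈ W.edges.toFinset, w e := by
  apply Finset.sum_congr _ (fun _ _ => rfl)
  ext e
  simp [Set.Finite.mem_toFinset, Walk.mem_edges_toSubgraph]

/-- first vertex of a walk that lies in S -/
lemma exists_walk_first_hit {V' : Type} {H : SimpleGraph V'} (S : Set V') :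
    ∀ {c b : V'} (q : H.Walk c b), b ∈ S →
    ∃ (u : V') (r : H.Walk c u), u ∈ S ∧ ∀ v ∈ r.support, v ∈ S → v = u := by
  intro c b q
  induction q with
  | nil =>
    intro hb
    exact ⟨_, Walk.nil, hb, by simp⟩
  | @cons c d b h p ih =>
    intro hb
    by_cases hc : c ∈ S
    · exact ⟨c, Walk.nil, hc, by simp⟩
    · obtain ⟨u, r, hu, hr⟩ := ih hb
      refine ⟨u, Walk.cons h r, hu, ?_⟩
      intro v hv hvS
      rw [Walk.support_cons, List.mem_cons] at hv
      rcases hv with rfl | hv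
      · exact absurd hvS hc
      · exact hr v hv hvS

end Helpers

section Tripod

variable {V : Type} [Fintype V] {G : SimpleGraph V} {w : Sym2 V → ℝ}

lemma mapped_edge_mem {R : G.Subgraph} {a b : R.verts} (W : R.coe.Walk a b) {e : Sym2 V}
    (he : e ∈ (W.map R.hom).edges) : e ∈ R.edgeSet := by
  rw [Walk.edges_map] at he
  obtain ⟨e', he', rfl⟩ := List.mem_map.mp he
  induction e' with
  | _ x y =>
    have hadj : R.coe.Adj x y := W.adj_of_mem_edges he'
    rw [Subgraph.coe_adj] at hadj
    have : Sym2.map (⇑R.hom) s(x, y) = s((x : V), (y : V)) := by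
      rw [Sym2.map_pair_eq]; rfl
    rw [this, Subgraph.mem_edgeSet]
    exact hadj

lemma tripod (hw : PosWeighted G w) (R : G.Subgraph) (hR : R.Connected)
    {x y z : V} (hx : x ∈ R.verts) (hy : y ∈ R.verts) (hz : z ∈ R.verts) :
    ∃ (m : V) (A B C : G.Subgraph), A.Connected ∧ B.Connected ∧ C.Connected ∧
      x ∈ A.verts ∧ m ∈ A.verts ∧ y ∈ B.verts ∧ m ∈ B.verts ∧
      z ∈ C.verts ∧ m ∈ C.verts ∧
      subgraphWeight w A + subgraphWeight w B + subgraphWeight w C ≤ subgraphWeight w R := by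
  classical
  obtain ⟨p0⟩ := hR.coe ⟨x, hx⟩ ⟨y, hy⟩
  set p := p0.bypass with hpdef
  have hpath : p.IsPath := p0.bypass_isPath
  obtain ⟨q0⟩ := hR.coe ⟨z, hz⟩ ⟨y, hy⟩
  have hyS : (⟨y, hy⟩ : R.verts) ∈ {v : R.verts | v ∈ p.support} := p.end_mem_support
  obtain ⟨u, r0, huS, hr0⟩ :=
    exists_walk_first_hit {v : R.verts | v ∈ p.support} q0 hyS
  set r := r0.bypass with hrdef
  have hrpath : r.IsPath := r0.bypass_isPath
  have hup : u ∈ p.support := huS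
  have hrsup : ∀ v ∈ r.support, v ∈ p.support → v = u := by
    intro v hv hvp
    exact hr0 v (r0.support_bypass_subset hv) hvp
  set A0 := p.takeUntil u hup with hA0
  set B0 := p.dropUntil u hup with hB0
  -- edge lists
  have hsplit : A0.edges ++ B0.edges = p.edges := by
    rw [← Walk.edges_append, Walk.take_spec]
  have hpnodup : p.edges.Nodup := hpath.edges_nodup
  have habnodup : (A0.edges ++ B0.edges).Nodup := hsplit ▸ hpnodup
  have hAnodup : A0.edges.Nodup := (List.nodup_append.mp habnodup).1
  have hBnodup : B0.edges.Nodup := (List.nodup_append.mp habnodup).2.1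
  have hABdisj : ∀ e ∈ A0.edges, e ∉ B0.edges := fun e he he' => (List.nodup_append'.mp habnodup).2.2 he he'
  have hCnodup : r.edges.Nodup := hrpath.edges_nodup
  have hCPdisj : ∀ e ∈ r.edges, e ∉ p.edges := by
    intro e he hep
    induction e with
    | _ v₁ v₂ =>
      have h1 : v₁ = u := hrsup v₁ (r.fst_mem_support_of_mem_edges he)
        (p.fst_mem_support_of_mem_edges hep)
      have h2 : v₂ = u := hrsup v₂ (r.snd_mem_support_of_mem_edges he)
        (p.snd_mem_support_of_mem_edges hep)
      have hadj : R.coe.Adj v₁ v₂ := r.adj_of_mem_edges he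
      rw [h1, h2] at hadj
      exact hadj.ne rfl
  -- mapped walks in G
  set f := R.hom with hf
  set pA := A0.map f with hpA
  set pB := B0.map f with hpB
  set pC := r.map f with hpC
  have hinj : Function.Injective (Sym2.map (⇑f)) :=
    Sym2.map.injective Subtype.val_injective
  refine ⟨(u : V), pA.toSubgraph, pB.toSubgraph, pC.toSubgraph,
    pA.toSubgraph_connected, pB.toSubgraph_connected, pC.toSubgraph_connected,
    pA.start_mem_verts_toSubgraph, pA.end_mem_verts_toSubgraph,
    pB.end_mem_verts_toSubgraph, pB.start_mem_verts_toSubgraph,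
    pC.start_mem_verts_toSubgraph, pC.end_mem_verts_toSubgraph, ?_⟩
  rw [weight_toSubgraph_eq, weight_toSubgraph_eq, weight_toSubgraph_eq]
  have hdAB : Disjoint pA.edges.toFinset pB.edges.toFinset := by
    rw [List.disjoint_toFinset_iff_disjoint]
    intro e heA heB
    rw [hpA, Walk.edges_map] at heA
    rw [hpB, Walk.edges_map] at heB
    obtain ⟨e1, he1, hee1⟩ := List.mem_map.mp heA
    obtain ⟨e2, he2, hee2⟩ := List.mem_map.mp heB
    have : e1 = e2 := hinj (hee1.trans hee2.symm)
    exact hABdisj e1 he1 (this ▸ he2)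
  have hdC : ∀ e ∈ pC.edges, e ∉ pA.edges ∧ e ∉ pB.edges := by
    intro e heC
    rw [hpC, Walk.edges_map] at heC
    obtain ⟨e0, he0, rfl⟩ := List.mem_map.mp heC
    constructor
    · intro heA
      rw [hpA, Walk.edges_map] at heA
      obtain ⟨e1, he1, hee1⟩ := List.mem_map.mp heA
      have : e1 = e0 := hinj hee1
      subst this
      exact hCPdisj e1 he0 (hsplit ▸ List.mem_append_left B0.edges he1)
    · intro heB
      rw [hpB, Walk.edges_map] at heB
      obtain ⟨e1, he1, hee1⟩ := List.mem_map.mp heB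
      have : e1 = e0 := hinj hee1
      subst this
      exact hCPdisj e1 he0 (hsplit ▸ List.mem_append_right A0.edges he1)
  have hdACB : Disjoint (pA.edges.toFinset ∪ pB.edges.toFinset) pC.edges.toFinset := by
    rw [Finset.disjoint_right]
    intro e heC heAB
    rw [List.mem_toFinset] at heC
    rcases Finset.mem_union.mp heAB with h | h
    · exact (hdC e heC).1 (List.mem_toFinset.mp h)
    · exact (hdC e heC).2 (List.mem_toFinset.mp h)
  calc (∑ e ∈ pA.edges.toFinset, w e) + (∑ e ∈ pB.edges.toFinset, w e)
        + (∑ e ∈ pC.edges.toFinset, w e)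
      = ∑ e ∈ pA.edges.toFinset ∪ pB.edges.toFinset ∪ pC.edges.toFinset, w e := by
        rw [Finset.sum_union hdACB, Finset.sum_union hdAB]
    _ ≤ subgraphWeight w R := by
        apply sum_le_weight hw
        intro e he
        simp only [Finset.coe_union, Set.mem_union, Finset.mem_coe,
          List.mem_toFinset] at he
        rcases he with (h | h) | h
        · exact mapped_edge_mem A0 h
        · exact mapped_edge_mem B0 h
        · exact mapped_edge_mem r h

end Tripod

section Main

variable {V : Type} [Fintype V] {G : SimpleGraph V} {w : Sym2 V → ℝ}

lemma bddBelow_distSet (hw : PosWeighted G w) (I : Set V) :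
    BddBelow {x : ℝ | ∃ R : G.Subgraph, R.Connected ∧ I ⊆ R.verts ∧ subgraphWeight w R = x} :=
  ⟨0, fun x ⟨R, _, _, hx⟩ => hx ▸ weight_nonneg hw R⟩

lemma graphDist_le (hw : PosWeighted G w) {I : Set V} (R : G.Subgraph) (hR : R.Connected)
    (hI : I ⊆ R.verts) : graphDist G w I ≤ subgraphWeight w R :=
  csInf_le (bddBelow_distSet hw I) ⟨R, hR, hI, rfl⟩

lemma le_mul_graphDist {I : Set V} {b c : ℝ} (hc : 0 < c)
    (hne : ∃ R : G.Subgraph, R.Connected ∧ I ⊆ R.verts)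
    (h : ∀ R : G.Subgraph, R.Connected → I ⊆ R.verts → b ≤ c * subgraphWeight w R) :
    b ≤ c * graphDist G w I := by
  obtain ⟨R0, hR0, hI0⟩ := hne
  have h1 : b / c ≤ graphDist G w I := by
    unfold graphDist
    apply le_csInf
    · exact ⟨subgraphWeight w R0, R0, hR0, hI0, rfl⟩
    rintro x ⟨R, hR, hI, rfl⟩
    rw [div_le_iff₀ hc]
    have := h R hR hI
    linarith
  have h2 := mul_le_mul_of_nonneg_left h1 hc.le
  rwa [mul_div_cancel₀ b hc.ne'] at h2

theorem four_vertices_five_ineq' {V : Type} [Fintype V]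
    (G : SimpleGraph V) (w : Sym2 V → ℝ) (hw : PosWeighted G w)
    (ι : Fin 4 → V) (hι : Function.Injective ι)
    (hconn : ∀ i j : Fin 4, G.Reachable (ι i) (ι j)) :
    ∀ i j k t : Fin 4, i ≠ j → i ≠ k → i ≠ t → j ≠ k → j ≠ t → k ≠ t →
      5 * graphDist G w (ι '' {m | m ≠ t}) ≤
        3 * graphDist G w (ι '' {m | m ≠ k}) + 3 * graphDist G w (ι '' {m | m ≠ j}) +
          2 * graphDist G w (ι '' {m | m ≠ i}) := by
  intro i j k t hij hik hit hjk hjt hkt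
  classical
  have h4 : ∀ m : Fin 4, m = i ∨ m = j ∨ m = k ∨ m = t := by
    intro m
    have d1 : i.val ≠ j.val := fun h => hij (Fin.ext h)
    have d2 : i.val ≠ k.val := fun h => hik (Fin.ext h)
    have d3 : i.val ≠ t.val := fun h => hit (Fin.ext h)
    have d4 : j.val ≠ k.val := fun h => hjk (Fin.ext h)
    have d5 : j.val ≠ t.val := fun h => hjt (Fin.ext h)
    have d6 : k.val ≠ t.val := fun h => hkt (Fin.ext h)
    have hi := i.isLt; have hj := j.isLt; have hk := k.isLt
    have ht := t.isLt; have hm := m.isLt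
    have : m.val = i.val ∨ m.val = j.val ∨ m.val = k.val ∨ m.val = t.val := by omega
    rcases this with h | h | h | h
    · exact Or.inl (Fin.ext h)
    · exact Or.inr (Or.inl (Fin.ext h))
    · exact Or.inr (Or.inr (Or.inl (Fin.ext h)))
    · exact Or.inr (Or.inr (Or.inr (Fin.ext h)))
  have himg : ∀ (s : Fin 4) (W : G.Subgraph), (∀ m : Fin 4, m ≠ s → ι m ∈ W.verts) →
      ι '' {m | m ≠ s} ⊆ W.verts := by
    rintro s W h _ ⟨m, hm, rfl⟩; exact h m hm
  have hext : ∀ (s : Fin 4) (W : G.Subgraph), ι '' {m | m ≠ s} ⊆ W.verts →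
      ∀ m : Fin 4, m ≠ s → ι m ∈ W.verts := by
    intro s W h m hm; exact h ⟨m, hm, rfl⟩
  -- a subgraph containing all four vertices
  obtain ⟨p1⟩ := hconn i j
  obtain ⟨p2⟩ := hconn j k
  obtain ⟨p3⟩ := hconn k t
  set W0 : G.Subgraph := p1.toSubgraph ⊔ p2.toSubgraph ⊔ p3.toSubgraph with hW0
  have c12 : (p1.toSubgraph ⊔ p2.toSubgraph).Connected :=
    Subgraph.connected_sup p1.toSubgraph_connected.preconnected p2.toSubgraph_connected.preconnected
      (by rw [Subgraph.verts_inf]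
          exact ⟨ι j, p1.end_mem_verts_toSubgraph, p2.start_mem_verts_toSubgraph⟩)
  have hW0conn : W0.Connected :=
    Subgraph.connected_sup c12.preconnected p3.toSubgraph_connected.preconnected
      (by rw [Subgraph.verts_inf, Subgraph.verts_sup]
          exact ⟨ι k, Or.inr p2.end_mem_verts_toSubgraph, p3.start_mem_verts_toSubgraph⟩)
  have hW0verts : ∀ m : Fin 4, ι m ∈ W0.verts := by
    intro m
    rw [hW0, Subgraph.verts_sup, Subgraph.verts_sup]
    rcases h4 m with rfl | rfl | rfl | rfl
    · exact Or.inl (Or.inl p1.start_mem_verts_toSubgraph)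
    · exact Or.inl (Or.inl p1.end_mem_verts_toSubgraph)
    · exact Or.inl (Or.inr p2.end_mem_verts_toSubgraph)
    · exact Or.inr p3.end_mem_verts_toSubgraph
  have hwit : ∀ s : Fin 4, ∃ R : G.Subgraph, R.Connected ∧ ι '' {m | m ≠ s} ⊆ R.verts :=
    fun s => ⟨W0, hW0conn, himg s W0 (fun m _ => hW0verts m)⟩
  -- the core inequality for explicit subgraphs
  have core : ∀ R S U : G.Subgraph, R.Connected → S.Connected → U.Connected →
      ι i ∈ R.verts → ι j ∈ R.verts → ι t ∈ R.verts →
      ι i ∈ S.verts → ι k ∈ S.verts → ι t ∈ S.verts →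
      ι j ∈ U.verts → ι k ∈ U.verts → ι t ∈ U.verts →
      5 * graphDist G w (ι '' {m | m ≠ t}) ≤
        3 * subgraphWeight w R + 3 * subgraphWeight w S + 2 * subgraphWeight w U := by
    intro R S U hRc hSc hUc hRi hRj hRt hSi hSk hSt hUj hUk hUt
    obtain ⟨mR, Ri, Rj, Rt, hRic, hRjc, hRtc, hiRi, hmRi, hjRj, hmRj, htRt, hmRt, hRw⟩ :=
      tripod hw R hRc hRi hRj hRt
    obtain ⟨mS, Si, Sk, St, hSic, hSkc, hStc, hiSi, hmSi, hkSk, hmSk, htSt, hmSt, hSw⟩ :=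
      tripod hw S hSc hSi hSk hSt
    obtain ⟨mU, Uj, Uk, Ut, hUjc, hUkc, hUtc, hjUj, hmUj, hkUk, hmUk, htUt, hmUt, hUw⟩ :=
      tripod hw U hUc hUj hUk hUt
    have hsup : ∀ {A B : G.Subgraph} {v : V}, A.Connected → B.Connected →
        v ∈ A.verts → v ∈ B.verts → (A ⊔ B).Connected := by
      intro A B v hA hB hvA hvB
      exact Subgraph.connected_sup hA.preconnected hB.preconnected ⟨v, by rw [Subgraph.verts_inf]; exact ⟨hvA, hvB⟩⟩
    have hvl : ∀ {A B : G.Subgraph} {v : V}, v ∈ A.verts → v ∈ (A ⊔ B).verts := by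
      intro A B v h; rw [Subgraph.verts_sup]; exact Or.inl h
    have hvr : ∀ {A B : G.Subgraph} {v : V}, v ∈ B.verts → v ∈ (A ⊔ B).verts := by
      intro A B v h; rw [Subgraph.verts_sup]; exact Or.inr h
    have wle := weight_sup_le (G := G) hw
    -- the five connected subgraphs containing ι i, ι j, ι k
    -- W₁ = (Ri ⊔ Rj) ⊔ (Si ⊔ Sk)
    have hW1c : ((Ri ⊔ Rj) ⊔ (Si ⊔ Sk)).Connected :=
      hsup (hsup hRic hRjc hmRi hmRj) (hsup hSic hSkc hmSi hmSk)
        (hvl hiRi) (hvl hiSi)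
    have hW1m : ∀ m : Fin 4, m ≠ t → ι m ∈ ((Ri ⊔ Rj) ⊔ (Si ⊔ Sk)).verts := by
      intro m hm
      rcases h4 m with rfl | rfl | rfl | rfl
      · exact hvl (hvl hiRi)
      · exact hvl (hvr hjRj)
      · exact hvr (hvr hkSk)
      · exact absurd rfl hm
    have hd1 : graphDist G w (ι '' {m | m ≠ t}) ≤ subgraphWeight w ((Ri ⊔ Rj) ⊔ (Si ⊔ Sk)) :=
      graphDist_le hw _ hW1c (himg t _ hW1m)
    have hb1 : subgraphWeight w ((Ri ⊔ Rj) ⊔ (Si ⊔ Sk)) ≤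
        (subgraphWeight w Ri + subgraphWeight w Rj) +
        (subgraphWeight w Si + subgraphWeight w Sk) :=
      le_trans (wle _ _) (add_le_add (wle _ _) (wle _ _))
    -- W₂ = ((Ri ⊔ Rj) ⊔ Rt) ⊔ (St ⊔ Sk)
    have hW2c : (((Ri ⊔ Rj) ⊔ Rt) ⊔ (St ⊔ Sk)).Connected :=
      hsup (hsup (hsup hRic hRjc hmRi hmRj) hRtc (hvl hmRi) hmRt)
        (hsup hStc hSkc hmSt hmSk) (hvr htRt) (hvl htSt)
    have hW2m : ∀ m : Fin 4, m ≠ t → ι m ∈ (((Ri ⊔ Rj) ⊔ Rt) ⊔ (St ⊔ Sk)).verts := by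
      intro m hm
      rcases h4 m with rfl | rfl | rfl | rfl
      · exact hvl (hvl (hvl hiRi))
      · exact hvl (hvl (hvr hjRj))
      · exact hvr (hvr hkSk)
      · exact absurd rfl hm
    have hd2 : graphDist G w (ι '' {m | m ≠ t}) ≤
        subgraphWeight w (((Ri ⊔ Rj) ⊔ Rt) ⊔ (St ⊔ Sk)) :=
      graphDist_le hw _ hW2c (himg t _ hW2m)
    have hb2 : subgraphWeight w (((Ri ⊔ Rj) ⊔ Rt) ⊔ (St ⊔ Sk)) ≤
        ((subgraphWeight w Ri + subgraphWeight w Rj) + subgraphWeight w Rt) +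
        (subgraphWeight w St + subgraphWeight w Sk) :=
      le_trans (wle _ _) (add_le_add
        (le_trans (wle _ _) (add_le_add (wle _ _) le_rfl)) (wle _ _))
    -- W₃ = ((Si ⊔ Sk) ⊔ St) ⊔ (Rt ⊔ Rj)
    have hW3c : (((Si ⊔ Sk) ⊔ St) ⊔ (Rt ⊔ Rj)).Connected :=
      hsup (hsup (hsup hSic hSkc hmSi hmSk) hStc (hvl hmSi) hmSt)
        (hsup hRtc hRjc hmRt hmRj) (hvr htSt) (hvl htRt)
    have hW3m : ∀ m : Fin 4, m ≠ t → ι m ∈ (((Si ⊔ Sk) ⊔ St) ⊔ (Rt ⊔ Rj)).verts := by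
      intro m hm
      rcases h4 m with rfl | rfl | rfl | rfl
      · exact hvl (hvl (hvl hiSi))
      · exact hvr (hvr hjRj)
      · exact hvl (hvl (hvr hkSk))
      · exact absurd rfl hm
    have hd3 : graphDist G w (ι '' {m | m ≠ t}) ≤
        subgraphWeight w (((Si ⊔ Sk) ⊔ St) ⊔ (Rt ⊔ Rj)) :=
      graphDist_le hw _ hW3c (himg t _ hW3m)
    have hb3 : subgraphWeight w (((Si ⊔ Sk) ⊔ St) ⊔ (Rt ⊔ Rj)) ≤
        ((subgraphWeight w Si + subgraphWeight w Sk) + subgraphWeight w St) +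
        (subgraphWeight w Rt + subgraphWeight w Rj) :=
      le_trans (wle _ _) (add_le_add
        (le_trans (wle _ _) (add_le_add (wle _ _) le_rfl)) (wle _ _))
    -- W₄ = (Ri ⊔ Rt) ⊔ ((Uj ⊔ Uk) ⊔ Ut)
    have hW4c : ((Ri ⊔ Rt) ⊔ ((Uj ⊔ Uk) ⊔ Ut)).Connected :=
      hsup (hsup hRic hRtc hmRi hmRt)
        (hsup (hsup hUjc hUkc hmUj hmUk) hUtc (hvl hmUj) hmUt)
        (hvr htRt) (hvr htUt)
    have hW4m : ∀ m : Fin 4, m ≠ t → ι m ∈ ((Ri ⊔ Rt) ⊔ ((Uj ⊔ Uk) ⊔ Ut)).verts := by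
      intro m hm
      rcases h4 m with rfl | rfl | rfl | rfl
      · exact hvl (hvl hiRi)
      · exact hvr (hvl (hvl hjUj))
      · exact hvr (hvl (hvr hkUk))
      · exact absurd rfl hm
    have hd4 : graphDist G w (ι '' {m | m ≠ t}) ≤
        subgraphWeight w ((Ri ⊔ Rt) ⊔ ((Uj ⊔ Uk) ⊔ Ut)) :=
      graphDist_le hw _ hW4c (himg t _ hW4m)
    have hb4 : subgraphWeight w ((Ri ⊔ Rt) ⊔ ((Uj ⊔ Uk) ⊔ Ut)) ≤
        (subgraphWeight w Ri + subgraphWeight w Rt) +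
        ((subgraphWeight w Uj + subgraphWeight w Uk) + subgraphWeight w Ut) :=
      le_trans (wle _ _) (add_le_add (wle _ _)
        (le_trans (wle _ _) (add_le_add (wle _ _) le_rfl)))
    -- W₅ = (Si ⊔ St) ⊔ ((Uj ⊔ Uk) ⊔ Ut)
    have hW5c : ((Si ⊔ St) ⊔ ((Uj ⊔ Uk) ⊔ Ut)).Connected :=
      hsup (hsup hSic hStc hmSi hmSt)
        (hsup (hsup hUjc hUkc hmUj hmUk) hUtc (hvl hmUj) hmUt)
        (hvr htSt) (hvr htUt)
    have hW5m : ∀ m : Fin 4, m ≠ t → ι m ∈ ((Si ⊔ St) ⊔ ((Uj ⊔ Uk) ⊔ Ut)).verts := by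
      intro m hm
      rcases h4 m with rfl | rfl | rfl | rfl
      · exact hvl (hvl hiSi)
      · exact hvr (hvl (hvl hjUj))
      · exact hvr (hvl (hvr hkUk))
      · exact absurd rfl hm
    have hd5 : graphDist G w (ι '' {m | m ≠ t}) ≤
        subgraphWeight w ((Si ⊔ St) ⊔ ((Uj ⊔ Uk) ⊔ Ut)) :=
      graphDist_le hw _ hW5c (himg t _ hW5m)
    have hb5 : subgraphWeight w ((Si ⊔ St) ⊔ ((Uj ⊔ Uk) ⊔ Ut)) ≤
        (subgraphWeight w Si + subgraphWeight w St) +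
        ((subgraphWeight w Uj + subgraphWeight w Uk) + subgraphWeight w Ut) :=
      le_trans (wle _ _) (add_le_add (wle _ _)
        (le_trans (wle _ _) (add_le_add (wle _ _) le_rfl)))
    linarith
  -- now pass to the infima, innermost first
  have step1 : ∀ R S : G.Subgraph, R.Connected → S.Connected →
      ι '' {m | m ≠ k} ⊆ R.verts → ι '' {m | m ≠ j} ⊆ S.verts →
      5 * graphDist G w (ι '' {m | m ≠ t}) - 3 * subgraphWeight w R - 3 * subgraphWeight w S
        ≤ 2 * graphDist G w (ι '' {m | m ≠ i}) := by
    intro R S hRc hSc hRsub hSsub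
    apply le_mul_graphDist (by norm_num) (hwit i)
    intro U hUc hUsub
    have := core R S U hRc hSc hUc
      (hext k R hRsub i hik) (hext k R hRsub j hjk) (hext k R hRsub t (Ne.symm hkt))
      (hext j S hSsub i hij) (hext j S hSsub k (Ne.symm hjk)) (hext j S hSsub t (Ne.symm hjt))
      (hext i U hUsub j (Ne.symm hij)) (hext i U hUsub k (Ne.symm hik))
      (hext i U hUsub t (Ne.symm hit))
    linarith
  have step2 : ∀ R : G.Subgraph, R.Connected → ι '' {m | m ≠ k} ⊆ R.verts →
      5 * graphDist G w (ι '' {m | m ≠ t}) - 3 * subgraphWeight w R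
        - 2 * graphDist G w (ι '' {m | m ≠ i})
        ≤ 3 * graphDist G w (ι '' {m | m ≠ j}) := by
    intro R hRc hRsub
    apply le_mul_graphDist (by norm_num) (hwit j)
    intro S hSc hSsub
    have := step1 R S hRc hSc hRsub hSsub
    linarith
  have step3 : 5 * graphDist G w (ι '' {m | m ≠ t})
      - 3 * graphDist G w (ι '' {m | m ≠ j}) - 2 * graphDist G w (ι '' {m | m ≠ i})
      ≤ 3 * graphDist G w (ι '' {m | m ≠ k}) := by
    apply le_mul_graphDist (by norm_num) (hwit k)
    intro R hRc hRsub
    have := step2 R hRc hRsub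
    linarith
  linarith

end Main

/-- Theorem 4.4, necessity (i): for four distinct vertices `1,2,3,4` in a common
connected component of a positive-weighted graph, `5·D_t̂ ≤ 3·D_k̂ + 3·D_ĵ + 2·D_î`. -/
theorem four_vertices_five_ineq {V : Type} [Fintype V]
    (G : SimpleGraph V) (w : Sym2 V → ℝ) (hw : PosWeighted G w)
    (ι : Fin 4 → V) (hι : Function.Injective ι)
    (hconn : ∀ i j : Fin 4, G.Reachable (ι i) (ι j)) :
    ∀ i j k t : Fin 4, i ≠ j → i ≠ k → i ≠ t → j ≠ k → j ≠ t → k ≠ t →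
      5 * graphDist G w (ι '' {m | m ≠ t}) ≤
        3 * graphDist G w (ι '' {m | m ≠ k}) + 3 * graphDist G w (ι '' {m | m ≠ j}) +
          2 * graphDist G w (ι '' {m | m ≠ i}) :=
  four_vertices_five_ineq' G w hw ι hι hconn
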